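/- In a locally finite topos, given an infinite sequence of epimorphisms f_n : A_n → A_{n+1} (n ∈ ℕ), there exists N such that f_n is an isomorphism for all n ≥ N. -/

import Mathlib

open CategoryTheory CategoryTheory.Limits

universe u v

/-- A subobject classifier, phrased as a property of a category with a terminal object. -/
class HasSubobjectClassifier (C : Type u) [Category.{v} C] [HasTerminal C] : Prop where
  exists_classifier : ∃ (Ω : C) (truth : ⊤_ C ⟶ Ω), ∀ {U X : C} (m : U ⟶ X), Mono m →
    ∃! χ : X ⟶ Ω, IsPullback m (terminal.from U) χ truth

section Aux

open MonoidalCategory CartesianMonoidalCategory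

variable {C : Type u} [Category.{v} C] [CartesianMonoidalCategory C]

lemma aux_epi_tensor [MonoidalClosed C] {X X' Y Y' : C} (f : X ⟶ X') (g : Y ⟶ Y')
    [Epi f] [Epi g] : Epi (f ⊗ₘ g) := by
  have h1 : Epi (X' ◁ g) := by
    have : (tensorLeft X').IsLeftAdjoint := (ihom.adjunction X').isLeftAdjoint
    exact (tensorLeft X').map_epi g
  have h2 : Epi (f ▷ Y) := by
    letI := BraidedCategory.ofCartesianMonoidalCategory (C := C)
    have hb : f ▷ Y = (β_ X Y).hom ≫ (Y ◁ f) ≫ (β_ X' Y).inv := by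
      rw [← Category.assoc, ← BraidedCategory.braiding_naturality_left f Y]
      simp
    have h3 : Epi (Y ◁ f) := by
      have : (tensorLeft Y).IsLeftAdjoint := (ihom.adjunction Y).isLeftAdjoint
      exact (tensorLeft Y).map_epi f
    rw [hb]
    exact epi_comp _ _
  rw [MonoidalCategory.tensorHom_def]
  exact epi_comp _ _

end Aux

open MonoidalCategory

theorem epi_sequence_stabilizes {C : Type u} [Category.{v} C] [HasFiniteLimits C] [CartesianMonoidalCategory C]
    [MonoidalClosed C] [_root_.HasSubobjectClassifier C]
    (locallyFinite : ∀ A B : C, Finite (A ⟶ B))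
    (A : ℕ → C) (f : ∀ n, A n ⟶ A (n + 1)) (hf : ∀ n, Epi (f n)) :
    ∃ N, ∀ n ≥ N, IsIso (f n) := by
  classical
  open MonoidalCategory CartesianMonoidalCategory in
  obtain ⟨Ω, truth, cls⟩ := _root_.HasSubobjectClassifier.exists_classifier (C := C)
  haveI := fun n => hf n
  -- the cardinality sequence
  haveI : ∀ X Y : C, Finite (X ⟶ Y) := locallyFinite
  set c : ℕ → ℕ := fun n => Nat.card ((A n ⊗ A n) ⟶ Ω) with hc
  have hepi : ∀ n, Epi (f n ⊗ₘ f n) := fun n => aux_epi_tensor (f n) (f n)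
  have hinj : ∀ n, Function.Injective
      (fun φ : (A (n + 1) ⊗ A (n + 1)) ⟶ Ω => (f n ⊗ₘ f n) ≫ φ) := by
    intro n φ ψ h
    haveI := hepi n
    simpa using (cancel_epi (f n ⊗ₘ f n)).mp h
  have hanti : ∀ m n, m ≤ n → c n ≤ c m := by
    have hstep : ∀ n, c (n + 1) ≤ c n := fun n =>
      Nat.card_le_card_of_injective _ (hinj n)
    intro m n h
    exact (antitone_nat_of_succ_le hstep) h
  -- the sequence is eventually constant
  obtain ⟨N, hN⟩ : ∃ N, ∀ n ≥ N, c n = c N := by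
    have hne : (Set.range c).Nonempty := ⟨c 0, ⟨0, rfl⟩⟩
    obtain ⟨N, hNval⟩ := Nat.sInf_mem hne
    refine ⟨N, fun n hn => ?_⟩
    have h1 : c n ≤ c N := hanti N n hn
    have h2 : c N ≤ c n := hNval ▸ Nat.sInf_le ⟨n, rfl⟩
    omega
  refine ⟨N, fun n hn => ?_⟩
  -- precomposition with `f n ⊗ₘ f n` is surjective
  have hsurj : ∀ E : (A n ⊗ A n) ⟶ Ω, ∃ φ, (f n ⊗ₘ f n) ≫ φ = E := by
    intro E
    have hcard : Nat.card ((A (n + 1) ⊗ A (n + 1)) ⟶ Ω) = Nat.card ((A n ⊗ A n) ⟶ Ω) := by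
      have e1 := hN n hn
      have e2 := hN (n + 1) (le_trans hn (Nat.le_succ n))
      simpa [hc] using e2.trans e1.symm
    have hbij := (Nat.bijective_iff_injective_and_card
      (fun φ : (A (n + 1) ⊗ A (n + 1)) ⟶ Ω => (f n ⊗ₘ f n) ≫ φ)).mpr ⟨hinj n, hcard⟩
    exact hbij.surjective E
  -- the classifier of the diagonal
  have hdiag_mono : Mono (CartesianMonoidalCategory.lift (𝟙 (A n)) (𝟙 (A n))) :=
    mono_of_mono_fac (CartesianMonoidalCategory.lift_fst _ _)
  obtain ⟨χδ, hδ, -⟩ := cls (CartesianMonoidalCategory.lift (𝟙 (A n)) (𝟙 (A n))) hdiag_mono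
  -- key property of χδ
  have hD₁ : ∀ {Z : C} (g : Z ⟶ A n),
      CartesianMonoidalCategory.lift g g ≫ χδ = terminal.from Z ≫ truth := by
    intro Z g
    have h1 : CartesianMonoidalCategory.lift g g
        = g ≫ CartesianMonoidalCategory.lift (𝟙 (A n)) (𝟙 (A n)) := by
      apply CartesianMonoidalCategory.hom_ext <;> simp
    rw [h1, Category.assoc, hδ.w, ← Category.assoc]
    congr 1
    exact terminal.hom_ext _ _
  have hD₂ : ∀ {Z : C} (g h : Z ⟶ A n),
      CartesianMonoidalCategory.lift g h ≫ χδ = terminal.from Z ≫ truth → g = h := by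
    intro Z g h hgh
    have hl := hδ.lift_fst (CartesianMonoidalCategory.lift g h) (terminal.from Z) hgh
    set l := hδ.lift (CartesianMonoidalCategory.lift g h) (terminal.from Z) hgh
    have hg : l ≫ CartesianMonoidalCategory.lift (𝟙 (A n)) (𝟙 (A n))
        ≫ CartesianMonoidalCategory.fst _ _ = g := by
      rw [← Category.assoc, hl]; simp
    have hh : l ≫ CartesianMonoidalCategory.lift (𝟙 (A n)) (𝟙 (A n))
        ≫ CartesianMonoidalCategory.snd _ _ = h := by
      rw [← Category.assoc, hl]; simp
    simp only [CartesianMonoidalCategory.lift_fst, CartesianMonoidalCategory.lift_snd,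
      Category.comp_id] at hg hh
    rw [← hg, ← hh]
  -- `f n` is a monomorphism
  have hmono : Mono (f n) := by
    obtain ⟨φ, hφ⟩ := hsurj χδ
    constructor
    intro Z u v huv
    -- use the kernel pair
    have hK : pullback.snd (f n) (f n) = pullback.fst (f n) (f n) := by
      apply hD₂
      set a := pullback.fst (f n) (f n)
      set b := pullback.snd (f n) (f n)
      have key : CartesianMonoidalCategory.lift b a ≫ (f n ⊗ₘ f n)
          = CartesianMonoidalCategory.lift a a ≫ (f n ⊗ₘ f n) := by
        rw [CartesianMonoidalCategory.lift_map, CartesianMonoidalCategory.lift_map,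
          pullback.condition]
      calc CartesianMonoidalCategory.lift b a ≫ χδ
          = CartesianMonoidalCategory.lift b a ≫ (f n ⊗ₘ f n) ≫ φ := by rw [hφ]
        _ = CartesianMonoidalCategory.lift a a ≫ (f n ⊗ₘ f n) ≫ φ := by
            rw [← Category.assoc, key, Category.assoc]
        _ = CartesianMonoidalCategory.lift a a ≫ χδ := by rw [hφ]
        _ = terminal.from _ ≫ truth := hD₁ a
    calc u = pullback.lift u v huv ≫ pullback.fst (f n) (f n) := (pullback.lift_fst u v huv).symm
      _ = pullback.lift u v huv ≫ pullback.snd (f n) (f n) := by rw [hK]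
      _ = v := pullback.lift_snd u v huv
  -- epi + mono + classifier ⇒ iso
  obtain ⟨χ, hχ, -⟩ := cls (f n) hmono
  have hχtriv : χ = terminal.from (A (n + 1)) ≫ truth := by
    have h1 : f n ≫ χ = f n ≫ terminal.from (A (n + 1)) ≫ truth := by
      rw [hχ.w, ← Category.assoc]
      congr 1
      exact terminal.hom_ext _ _
    exact (cancel_epi (f n)).mp h1
  have hw : 𝟙 (A (n + 1)) ≫ χ = terminal.from (A (n + 1)) ≫ truth := by
    rw [Category.id_comp, hχtriv]
  have hl := hχ.lift_fst (𝟙 (A (n + 1))) (terminal.from (A (n + 1))) hw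
  set l := hχ.lift (𝟙 (A (n + 1))) (terminal.from (A (n + 1))) hw
  have hfl : f n ≫ l = 𝟙 (A n) := by
    have : (f n ≫ l) ≫ f n = 𝟙 (A n) ≫ f n := by
      rw [Category.assoc, hl, Category.comp_id, Category.id_comp]
    exact (cancel_mono (f n)).mp this
  exact ⟨⟨l, hfl, hl⟩⟩
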